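/- Let C₁, C₂ > 0, β > 0 and α > −1. For the internal-state space 𝓔 = ℝ with measure dμ(z) = C₁|z|^α dz and energy ε(z) = C₂|z|^β, one has for every T > 0: δ(T) = (2/(k_B T)) · ( ∫_ℝ C₂|z|^β e^{−C₂|z|^β/(k_B T)} C₁|z|^α dz ) / ( ∫_ℝ e^{−C₂|z|^β/(k_B T)} C₁|z|^α dz ) = 2(α+1)/β; in particular δ is constant and D(T) = 2(α+1)/β as well. -/

import Mathlib

open MeasureTheory Real

noncomputable section

private lemma key_Ioi {s β b : ℝ} (hβ : 0 < β) (hb : 0 < b) (hs : -1 < s) :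
    ∫ x in Set.Ioi (0:ℝ), x ^ s * Real.exp (-(b * x ^ β)) =
      (1/β) * ((1/b) ^ ((s+1)/β) * Real.Gamma ((s+1)/β)) := by
  have ha : 0 < (s+1)/β := div_pos (by linarith) hβ
  calc ∫ x in Set.Ioi (0:ℝ), x ^ s * Real.exp (-(b * x ^ β))
      = (1/β) * ∫ x in Set.Ioi (0:ℝ),
          (β * x ^ (β-1)) • ((fun t => t ^ ((s+1)/β - 1) * Real.exp (-(b*t))) (x ^ β)) := by
        rw [← integral_const_mul]
        refine (setIntegral_congr_fun measurableSet_Ioi fun x hx => ?_).symm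
        have hx : (0:ℝ) < x := hx
        have h1 : (x^β) ^ ((s+1)/β - 1) = x ^ (s + 1 - β) := by
          rw [← Real.rpow_mul hx.le]; congr 1; field_simp
        have h2 : x ^ (β-1) * x ^ (s+1-β) = x ^ s := by
          rw [← Real.rpow_add hx]; ring_nf
        simp only [smul_eq_mul, h1]
        rw [← h2]; field_simp
      _ = (1/β) * ((1/b) ^ ((s+1)/β) * Real.Gamma ((s+1)/β)) := by
        rw [integral_comp_rpow_Ioi_of_pos
          (g := fun t => t ^ ((s+1)/β - 1) * Real.exp (-(b*t))) hβ,
          integral_rpow_mul_exp_neg_mul_Ioi ha hb]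

/-- The number of internal degrees of freedom for the model `𝓔 = ℝ`,
`dμ(z) = C₁ |z|^α dz`, `ε(z) = C₂ |z|^β` (here `ε⁰ = 0`, so `ε̄ = ε`):
`δ(T) = (2/(k_B T)) ⬝ (∫ C₂|z|^β e^{-C₂|z|^β/(k_B T)} C₁|z|^α dz) /
  (∫ e^{-C₂|z|^β/(k_B T)} C₁|z|^α dz)`. -/
def deltaPow (C₁ C₂ α β kB T : ℝ) : ℝ :=
  (2 / (kB * T)) *
    ((∫ z : ℝ, (C₂ * |z| ^ β) * Real.exp (-(C₂ * |z| ^ β) / (kB * T)) * (C₁ * |z| ^ α)) /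
      (∫ z : ℝ, Real.exp (-(C₂ * |z| ^ β) / (kB * T)) * (C₁ * |z| ^ α)))

/-- **Proposition (power-law models are polytropic).**
For the model `𝓔 = ℝ`, `dμ(z) = C₁|z|^α dz`, `ε(z) = C₂|z|^β` with `C₁, C₂ > 0`, `β > 0`
and `α > −1`, one has `δ(T) = 2(α+1)/β` for every `T > 0`; in particular `δ` is constant
and `D(T) = d(Tδ(T))/dT = 2(α+1)/β` as well. -/
theorem delta_pow_law
    (C₁ C₂ : ℝ) (hC₁ : 0 < C₁) (hC₂ : 0 < C₂)
    (β : ℝ) (hβ : 0 < β) (α : ℝ) (hα : -1 < α)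
    (kB : ℝ) (hkB : 0 < kB) :
    ∀ T : ℝ, 0 < T →
      deltaPow C₁ C₂ α β kB T = 2 * (α + 1) / β ∧
      deriv (fun s => s * deltaPow C₁ C₂ α β kB s) T = 2 * (α + 1) / β := by
  have hmain : ∀ T : ℝ, 0 < T → deltaPow C₁ C₂ α β kB T = 2 * (α + 1) / β := by
    intro T hT
    set b := C₂ / (kB * T) with hbdef
    have hkT : 0 < kB * T := mul_pos hkB hT
    have hb : 0 < b := div_pos hC₂ hkT
    set a := (α + 1) / β with hadef
    have ha : 0 < a := div_pos (by linarith) hβ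
    have hG : 0 < Real.Gamma a := Real.Gamma_pos_of_pos ha
    have hαβ : -1 < α + β := by linarith
    -- denominator
    have hden : (∫ z : ℝ, Real.exp (-(C₂ * |z| ^ β) / (kB * T)) * (C₁ * |z| ^ α)) =
        2 * (C₁ * ((1/β) * ((1/b) ^ a * Real.Gamma a))) := by
      have habs : (∫ z : ℝ, Real.exp (-(C₂ * |z| ^ β) / (kB * T)) * (C₁ * |z| ^ α)) =
          2 * ∫ x in Set.Ioi (0:ℝ), Real.exp (-(C₂ * x ^ β) / (kB * T)) * (C₁ * x ^ α) :=
        integral_comp_abs (f := fun x => Real.exp (-(C₂ * x ^ β) / (kB * T)) * (C₁ * x ^ α))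
      rw [habs]
      congr 1
      calc (∫ x in Set.Ioi (0:ℝ), Real.exp (-(C₂ * x ^ β) / (kB * T)) * (C₁ * x ^ α))
          = ∫ x in Set.Ioi (0:ℝ), C₁ * (x ^ α * Real.exp (-(b * x ^ β))) := by
            refine setIntegral_congr_fun measurableSet_Ioi fun x hx => ?_
            rw [show -(C₂ * x ^ β) / (kB * T) = -(b * x ^ β) by rw [hbdef]; ring]
            ring
        _ = C₁ * ((1/β) * ((1/b) ^ a * Real.Gamma a)) := by
            rw [integral_const_mul, key_Ioi hβ hb hα]
    -- numerator
    have hnum : (∫ z : ℝ, (C₂ * |z| ^ β) * Real.exp (-(C₂ * |z| ^ β) / (kB * T)) * (C₁ * |z| ^ α)) =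
        2 * (C₁ * C₂ * ((1/β) * ((1/b) ^ (a+1) * (a * Real.Gamma a)))) := by
      have habs : (∫ z : ℝ, (C₂ * |z| ^ β) * Real.exp (-(C₂ * |z| ^ β) / (kB * T)) * (C₁ * |z| ^ α)) =
          2 * ∫ x in Set.Ioi (0:ℝ),
            (C₂ * x ^ β) * Real.exp (-(C₂ * x ^ β) / (kB * T)) * (C₁ * x ^ α) :=
        integral_comp_abs
          (f := fun x => (C₂ * x ^ β) * Real.exp (-(C₂ * x ^ β) / (kB * T)) * (C₁ * x ^ α))
      rw [habs]
      congr 1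
      calc (∫ x in Set.Ioi (0:ℝ), (C₂ * x ^ β) * Real.exp (-(C₂ * x ^ β) / (kB * T)) * (C₁ * x ^ α))
          = ∫ x in Set.Ioi (0:ℝ), (C₁ * C₂) * (x ^ (α + β) * Real.exp (-(b * x ^ β))) := by
            refine setIntegral_congr_fun measurableSet_Ioi fun x hx => ?_
            have hx : (0:ℝ) < x := hx
            rw [show -(C₂ * x ^ β) / (kB * T) = -(b * x ^ β) by rw [hbdef]; ring,
              Real.rpow_add hx]
            ring
        _ = C₁ * C₂ * ((1/β) * ((1/b) ^ (a+1) * (a * Real.Gamma a))) := by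
            rw [integral_const_mul, key_Ioi hβ hb hαβ]
            have h1 : (α + β + 1) / β = a + 1 := by rw [hadef]; field_simp; ring
            have h2 : Real.Gamma (a + 1) = a * Real.Gamma a := Real.Gamma_add_one ha.ne'
            rw [h1, h2]
    rw [deltaPow, hnum, hden]
    have hpow : (0:ℝ) < (1/b) ^ a := Real.rpow_pos_of_pos (by positivity) a
    rw [Real.rpow_add (by positivity : (0:ℝ) < 1/b), Real.rpow_one]
    rw [hadef, hbdef]
    field_simp
    have hG'' : Real.Gamma ((α + 1) / β) ≠ 0 := hG.ne'
    rw [mul_div_assoc, div_self hG'', mul_one]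
  intro T hT
  refine ⟨hmain T hT, ?_⟩
  have hev : (fun s => s * deltaPow C₁ C₂ α β kB s) =ᶠ[nhds T]
      (fun s => s * (2 * (α + 1) / β)) := by
    filter_upwards [Ioi_mem_nhds hT] with s hs
    rw [hmain s hs]
  rw [hev.deriv_eq]
  exact (((hasDerivAt_id T).mul_const (2 * (α + 1) / β)).deriv).trans (one_mul _)

end
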